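/- Let ⟨s,t,f⟩ be a linear identity of length 2n such that f(1) = 1 (the leftmost variable is the same on both sides) or f(n) = n (the rightmost variable is the same on both sides). Let F₂ be the free groupoid on two generators satisfying ⟨s,t,f⟩, i.e., the quotient of FreeMagma(Fin 2) by the smallest multiplicative congruence containing all substitution instances of the identity ⟨s,t,f⟩. Then for every m ≥ 3, F₂ is not mAC-nice; in particular F₂ is not ultimately AC-nice, hence the identity ⟨s,t,f⟩ is not ultimately AC-nice. -/

import Mathlib

/-- Bracketings: full binary trees in which every internal node has two children. -/
inductive Brack : Type
  | leaf : Brack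
  | node : Brack → Brack → Brack

/-- Number of leaves of a bracketing. -/
def Brack.leaves : Brack → ℕ
  | .leaf => 1
  | .node l r => l.leaves + r.leaves

/-- The `s`-product in a magma `G`: evaluate the bracketing `s`, labelling its leaves
from left to right by `a k, a (k+1), …`. -/
def Brack.eval {G : Type*} [Mul G] : Brack → (ℕ → G) → ℕ → G
  | .leaf, a, k => a k
  | .node l r, a, k => l.eval a k * r.eval a (k + l.leaves)

/-- Extend a permutation of `{0, …, n−1}` to `ℕ` (identity elsewhere). -/
def permNat {n : ℕ} (f : Equiv.Perm (Fin n)) (i : ℕ) : ℕ :=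
  if h : i < n then (f ⟨i, h⟩ : ℕ) else i

/-- A magma `G` satisfies the linear identity `⟨s, t, f⟩` if for all `a₁, …, aₙ ∈ G`
the `s`-product of `(a₁, …, aₙ)` equals the `t`-product of `(a_{f(1)}, …, a_{f(n)})`. -/
def Satisfies (G : Type*) [Mul G] {n : ℕ} (s t : Brack) (f : Equiv.Perm (Fin n)) : Prop :=
  ∀ a : ℕ → G, s.eval a 0 = t.eval (fun i => a (permNat f i)) 0

/-- A magma `G` is `m`AC-nice if any two products of the same `m` elements coincide:
for every `a`, all bracketings `s, t` with `m` leaves and all permutations `f, g`,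
the `s`-product of `(a_{f(1)}, …, a_{f(m)})` equals the `t`-product of
`(a_{g(1)}, …, a_{g(m)})`. -/
def ACnice (G : Type*) [Mul G] (m : ℕ) : Prop :=
  ∀ (a : ℕ → G) (s t : Brack), s.leaves = m → t.leaves = m →
    ∀ f g : Equiv.Perm (Fin m),
      s.eval (fun i => a (permNat f i)) 0 = t.eval (fun i => a (permNat g i)) 0

/-- Substitution instances of the linear identity `⟨s,t,f⟩` in the free magma on two
generators: pairs obtained by substituting arbitrary terms for the variables. -/
def instRel {n : ℕ} (s t : Brack) (f : Equiv.Perm (Fin n))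
    (x y : FreeMagma (Fin 2)) : Prop :=
  ∃ a : ℕ → FreeMagma (Fin 2),
    x = s.eval a 0 ∧ y = t.eval (fun i => a (permNat f i)) 0

/-- Two-element magma with left-projection multiplication. -/
structure LTwo where val : Bool

instance : Mul LTwo := ⟨fun x _ => x⟩

@[simp] lemma LTwo.mul_def (x y : LTwo) : x * y = x := rfl

/-- Two-element magma with right-projection multiplication. -/
structure RTwo where val : Bool

instance : Mul RTwo := ⟨fun _ y => y⟩

@[simp] lemma RTwo.mul_def (x y : RTwo) : x * y = y := rfl

lemma Brack.leaves_pos (b : Brack) : 0 < b.leaves := by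
  induction b with
  | leaf => exact Nat.one_pos
  | node l r ihl ihr => simpa [Brack.leaves] using Nat.add_pos_left ihl _

/-- Right comb with `n+1` leaves. -/
def comb : ℕ → Brack
  | 0 => .leaf
  | n + 1 => .node .leaf (comb n)

@[simp] lemma comb_leaves (n : ℕ) : (comb n).leaves = n + 1 := by
  induction n with
  | zero => rfl
  | succ n ih => simp [comb, Brack.leaves, ih]; omega

/-- Mul homs commute with `Brack.eval`. -/
lemma hom_eval {G M : Type*} [Mul G] [Mul M] (φ : G →ₙ* M) (b : Brack) (a : ℕ → G) (k : ℕ) :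
    φ (b.eval a k) = b.eval (fun i => φ (a i)) k := by
  induction b generalizing k with
  | leaf => rfl
  | node l r ihl ihr => simp [Brack.eval, map_mul, ihl, ihr]

lemma ltwo_eval (b : Brack) (a : ℕ → LTwo) (k : ℕ) : b.eval a k = a k := by
  induction b generalizing k with
  | leaf => rfl
  | node l r ihl ihr => simp [Brack.eval, ihl]

lemma rtwo_eval (b : Brack) (a : ℕ → RTwo) (k : ℕ) : b.eval a k = a (k + b.leaves - 1) := by
  induction b generalizing k with
  | leaf => rfl
  | node l r ihl ihr =>
    simp only [Brack.eval, RTwo.mul_def, ihr]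
    congr 1
    simp [Brack.leaves]
    omega

/-- The congruence induced by a mul hom. -/
def homCon {G M : Type*} [Mul G] [Mul M] (φ : G →ₙ* M) : Con G where
  r x y := φ x = φ y
  iseqv := ⟨fun _ => rfl, Eq.symm, Eq.trans⟩
  mul' h1 h2 := by simp only [map_mul]; exact congrArg₂ (· * ·) h1 h2

/-- The quotient map commutes with `Brack.eval`. -/
lemma mk_eval {G : Type*} [Mul G] (c : Con G) (b : Brack) (a : ℕ → G) (k : ℕ) :
    ((b.eval a k : G) : c.Quotient) = b.eval (fun i => ((a i : G) : c.Quotient)) k := by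
  induction b generalizing k with
  | leaf => rfl
  | node l r ihl ihr => simp [Brack.eval, Con.coe_mul, ihl, ihr]

/-- Lemma 5.2: if the linear identity `⟨s,t,f⟩` of length `2n` satisfies `f(1) = 1` or
`f(n) = n`, then the free groupoid on two generators satisfying `⟨s,t,f⟩` (the quotient
of `FreeMagma (Fin 2)` by the smallest multiplicative congruence containing all
substitution instances of the identity) is not `m`AC-nice for any `m ≥ 3`; in particular
it is not ultimately AC-nice, hence `⟨s,t,f⟩` is not an ultimately AC-nice identity. -/
theorem stmt8 (n : ℕ) (hn : 0 < n)
    (s t : Brack) (hs : s.leaves = n) (ht : t.leaves = n) (f : Equiv.Perm (Fin n))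
    (hf : f ⟨0, hn⟩ = ⟨0, hn⟩ ∨
      f ⟨n - 1, Nat.sub_lt hn Nat.one_pos⟩ = ⟨n - 1, Nat.sub_lt hn Nat.one_pos⟩) :
    ∀ m : ℕ, 3 ≤ m → ¬ACnice (conGen (instRel s t f)).Quotient m := by
  intro m hm hAC
  set c := conGen (instRel s t f) with hc
  have hB : (comb (m - 1)).leaves = m := by rw [comb_leaves]; omega
  set B := comb (m - 1) with hBdef
  -- the labelling: variable 0 in position 0, variable 1 elsewhere
  set A : ℕ → FreeMagma (Fin 2) := fun i => FreeMagma.of (if i = 0 then 0 else 1) with hA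
  have hpid : ∀ i : ℕ, permNat (1 : Equiv.Perm (Fin m)) i = i := by
    intro i
    unfold permNat
    split <;> simp
  rcases hf with hf | hf
  · -- left case
    set φ : FreeMagma (Fin 2) →ₙ* LTwo := FreeMagma.lift (fun i => ⟨i.val == 1⟩) with hφ
    have hp0 : permNat f 0 = 0 := by
      unfold permNat
      rw [dif_pos hn]
      exact congrArg Fin.val hf
    have hle : c ≤ homCon φ := by
      rw [hc]
      refine Con.conGen_le.mpr ?_
      rintro x y ⟨a, rfl, rfl⟩
      show φ _ = φ _
      rw [hom_eval, hom_eval, ltwo_eval, ltwo_eval]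
      simp only [hp0]
    set g : Equiv.Perm (Fin m) := Equiv.swap ⟨0, by omega⟩ ⟨1, by omega⟩ with hg
    have hpg0 : permNat g 0 = 1 := by
      unfold permNat
      rw [dif_pos (show 0 < m by omega)]
      rw [hg]
      rw [show (⟨0, show 0 < m by omega⟩ : Fin m) = ⟨0, by omega⟩ from rfl,
        Equiv.swap_apply_left]
    have key := hAC (fun i => ((A i : FreeMagma (Fin 2)) : c.Quotient)) B B hB hB 1 g
    have e1 := mk_eval c B (fun i => A (permNat (1 : Equiv.Perm (Fin m)) i)) 0
    have e2 := mk_eval c B (fun i => A (permNat g i)) 0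
    have key' : ((B.eval (fun i => A (permNat (1 : Equiv.Perm (Fin m)) i)) 0 :
        FreeMagma (Fin 2)) : c.Quotient)
        = ((B.eval (fun i => A (permNat g i)) 0 : FreeMagma (Fin 2)) : c.Quotient) :=
      e1.trans (key.trans e2.symm)
    have h2 : φ (B.eval (fun i => A (permNat (1 : Equiv.Perm (Fin m)) i)) 0)
        = φ (B.eval (fun i => A (permNat g i)) 0) :=
      Con.le_def.mp hle ((Con.eq _).mp key')
    rw [hom_eval, hom_eval, ltwo_eval, ltwo_eval] at h2
    simp only [hpid, hpg0, hA, hφ] at h2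
    simp [FreeMagma.lift_of, LTwo.mk.injEq] at h2
  · -- right case
    set φ : FreeMagma (Fin 2) →ₙ* RTwo := FreeMagma.lift (fun i => ⟨i.val == 1⟩) with hφ
    have hp0 : permNat f (n - 1) = n - 1 := by
      unfold permNat
      rw [dif_pos (Nat.sub_lt hn Nat.one_pos)]
      exact congrArg Fin.val hf
    have hle : c ≤ homCon φ := by
      rw [hc]
      refine Con.conGen_le.mpr ?_
      rintro x y ⟨a, rfl, rfl⟩
      show φ _ = φ _
      rw [hom_eval, hom_eval, rtwo_eval, rtwo_eval, hs, ht]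
      simp only [Nat.zero_add, hp0]
    set g : Equiv.Perm (Fin m) := Equiv.swap ⟨0, by omega⟩ ⟨m - 1, by omega⟩ with hg
    have hpg0 : permNat g (m - 1) = 0 := by
      unfold permNat
      rw [dif_pos (show m - 1 < m by omega)]
      rw [hg]
      rw [show (⟨m - 1, show m - 1 < m by omega⟩ : Fin m) = ⟨m - 1, by omega⟩ from rfl,
        Equiv.swap_apply_right]
    have key := hAC (fun i => ((A i : FreeMagma (Fin 2)) : c.Quotient)) B B hB hB 1 g
    have e1 := mk_eval c B (fun i => A (permNat (1 : Equiv.Perm (Fin m)) i)) 0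
    have e2 := mk_eval c B (fun i => A (permNat g i)) 0
    have key' : ((B.eval (fun i => A (permNat (1 : Equiv.Perm (Fin m)) i)) 0 :
        FreeMagma (Fin 2)) : c.Quotient)
        = ((B.eval (fun i => A (permNat g i)) 0 : FreeMagma (Fin 2)) : c.Quotient) :=
      e1.trans (key.trans e2.symm)
    have h2 : φ (B.eval (fun i => A (permNat (1 : Equiv.Perm (Fin m)) i)) 0)
        = φ (B.eval (fun i => A (permNat g i)) 0) :=
      Con.le_def.mp hle ((Con.eq _).mp key')
    rw [hom_eval, hom_eval, rtwo_eval, rtwo_eval, hB] at h2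
    simp only [Nat.zero_add, hpid, hpg0, hA, hφ] at h2
    have hm1 : m - 1 ≠ 0 := by omega
    simp [FreeMagma.lift_of, hm1, RTwo.mk.injEq] at h2
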